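/- Let Γ be a profinite group, M a discrete Γ-module whose underlying abelian group is finitely generated and free. Then there is an exact sequence 0 → H^1(Γ, Hom_ℤ(M, A)) → Ext^1_Γ(M, A) → Ext^1_ℤ(M, A) for any discrete Γ-module A; in particular, if A is divisible (so Ext^1_ℤ(M, A) = 0) and H^1(Γ, Hom_ℤ(M, A)) = 0, then Ext^1_Γ(M, A) = 0. -/

import Mathlib

private lemma lift_aux {A E M : Type} [AddCommGroup A] [AddCommGroup E] [AddCommGroup M]
    (i : A →+ E) (hi : Function.Injective i)
    (d : M →+ E) (hd : ∀ x, d x ∈ Set.range i) :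
    ∃ h : M →+ A, ∀ x, i (h x) = d x := by
  choose h hh using hd
  refine ⟨AddMonoidHom.mk' h ?_, hh⟩
  intro a b
  apply hi
  rw [map_add, hh, hh, hh, map_add]

/- Ext groups of discrete modules over the profinite group `Γ` are described concretely:
`Ext¹_Γ(M, A) = 0` means that every short exact sequence of discrete `Γ`-modules
`0 → A → E → M → 0` splits `Γ`-equivariantly, `Ext¹_ℤ(M, A) = 0` that it splits
additively, and `H¹(Γ, Hom_ℤ(M, A))` (continuous cohomology for the action
`(σ·f)(m) = σ f(σ⁻¹ m)`) is described by locally constant cocycles modulo coboundaries.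
The exact sequence `0 → H¹(Γ, Hom_ℤ(M, A)) → Ext¹_Γ(M, A) → Ext¹_ℤ(M, A)` is expressed
by its content on classes: an extension with an additive splitting `s` (i.e. mapping to
`0` in `Ext¹_ℤ(M, A)`) comes from the class of the cocycle `g ↦ (x ↦ s(g•x) - g•s(x))`
of `H¹(Γ, Hom_ℤ(M, A))`, and it is `Γ`-split exactly when that cocycle is a
coboundary. -/

/-- **(Low-degree exact sequence for Ext of discrete modules, `M` finite free over
`ℤ`.)** Let `Γ` be a profinite group and `M`, `A` discrete `Γ`-modules with `M`
finitely generated and free as an abelian group.  Then: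
(1) for every short exact sequence of discrete `Γ`-modules `0 → A → E → M → 0`
equipped with an additive splitting `s` — i.e. whose class dies in `Ext¹_ℤ(M, A)` —
the extension splits `Γ`-equivariantly if and only if its associated
`Hom_ℤ(M, A)`-valued 1-cocycle `g ↦ s(g•·) - g•s(·)` is a coboundary; this expresses
the exactness of `0 → H¹(Γ, Hom_ℤ(M, A)) → Ext¹_Γ(M, A) → Ext¹_ℤ(M, A)`;
(2) in particular, if `A` is divisible (so `Ext¹_ℤ(M, A) = 0`) and
`H¹(Γ, Hom_ℤ(M, A)) = 0`, then `Ext¹_Γ(M, A) = 0`, i.e. every short exact sequence of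
discrete `Γ`-modules `0 → A → E → M → 0` splits `Γ`-equivariantly. -/
theorem ext_discrete_low_degree_sequence
    (Γ : Type) [Group Γ] [TopologicalSpace Γ] [IsTopologicalGroup Γ]
    [CompactSpace Γ] [TotallyDisconnectedSpace Γ] [T2Space Γ]
    (M A : Type)
    [AddCommGroup M] [DistribMulAction Γ M]
    [AddCommGroup A] [DistribMulAction Γ A]
    [Module.Free ℤ M] [Module.Finite ℤ M]
    (hMd : ∀ x : M, IsOpen {g : Γ | g • x = x})
    (hAd : ∀ a : A, IsOpen {g : Γ | g • a = a}) :
    -- (1) exactness of `0 → H¹(Γ, Hom_ℤ(M, A)) → Ext¹_Γ(M, A) → Ext¹_ℤ(M, A)`: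
    (∀ (E : Type) (_ : AddCommGroup E) (_ : DistribMulAction Γ E),
      (∀ e : E, IsOpen {g : Γ | g • e = e}) →
      ∀ (i : A →+ E) (p : E →+ M),
        (∀ (g : Γ) (a : A), i (g • a) = g • i a) →
        (∀ (g : Γ) (e : E), p (g • e) = g • p e) →
        Function.Injective i → Function.Surjective p →
        (∀ e : E, p e = 0 ↔ e ∈ Set.range i) →
        -- an additive (`ℤ`-linear) splitting `s`, witnessing that the class of the
        -- extension maps to `0` in `Ext¹_ℤ(M, A)`:
        ∀ s : M →+ E, (∀ x : M, p (s x) = x) →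
        -- the extension splits `Γ`-equivariantly iff its cocycle is a coboundary:
        ((∃ σ : M →+ E, (∀ (g : Γ) (x : M), σ (g • x) = g • σ x) ∧ ∀ x, p (σ x) = x) ↔
          (∃ h : M →+ A, ∀ (g : Γ) (x : M),
            i (h (g • x)) - g • i (h x) = s (g • x) - g • s x))) ∧
    -- (2) if `A` is divisible and `H¹(Γ, Hom_ℤ(M, A)) = 0`, then `Ext¹_Γ(M, A) = 0`:
    ((∀ (a : A) (n : ℕ), n ≠ 0 → ∃ b : A, n • b = a) →
      (∀ c : Γ → (M →+ A), IsLocallyConstant c →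
        (∀ (g h : Γ) (x : M), c (g * h) x = c g x + g • c h (g⁻¹ • x)) →
        ∃ f : M →+ A, ∀ (g : Γ) (x : M), c g x = g • f (g⁻¹ • x) - f x) →
      ∀ (E : Type) (_ : AddCommGroup E) (_ : DistribMulAction Γ E),
        (∀ e : E, IsOpen {g : Γ | g • e = e}) →
        ∀ (i : A →+ E) (p : E →+ M),
          (∀ (g : Γ) (a : A), i (g • a) = g • i a) →
          (∀ (g : Γ) (e : E), p (g • e) = g • p e) →
          Function.Injective i → Function.Surjective p →
          (∀ e : E, p e = 0 ↔ e ∈ Set.range i) →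
          ∃ σ : M →+ E, (∀ (g : Γ) (x : M), σ (g • x) = g • σ x) ∧ ∀ x, p (σ x) = x) := by
  constructor
  · -- Part (1)
    intro E _ _ _hEd i p hieq hpeq hinj hsurj hker s hs
    constructor
    · rintro ⟨σ, hσeq, hσp⟩
      have hd : ∀ x : M, (s - σ) x ∈ Set.range i := by
        intro x
        rw [← hker]
        simp [hs, hσp]
      obtain ⟨h, hh⟩ := lift_aux i hinj (s - σ) hd
      refine ⟨h, fun g x => ?_⟩
      rw [hh, hh]
      simp only [AddMonoidHom.sub_apply, smul_sub, hσeq]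
      abel
    · rintro ⟨h, hh⟩
      refine ⟨s - i.comp h, fun g x => ?_, fun x => ?_⟩
      · simp only [AddMonoidHom.sub_apply, AddMonoidHom.comp_apply, smul_sub]
        rw [sub_eq_sub_iff_sub_eq_sub]
        exact (hh g x).symm
      · have hpi : ∀ a : A, p (i a) = 0 := fun a => (hker (i a)).2 ⟨a, rfl⟩
        simp [hs, hpi]
  · -- Part (2)
    intro _hdiv hH1 E _ _ hEd i p hieq hpeq hinj hsurj hker
    have hpi : ∀ a : A, p (i a) = 0 := fun a => (hker (i a)).2 ⟨a, rfl⟩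
    -- an additive splitting exists since `M` is free over `ℤ`
    obtain ⟨sl, hsl⟩ := Module.projective_lifting_property p.toIntLinearMap
      (LinearMap.id : M →ₗ[ℤ] M) hsurj
    set s : M →+ E := sl.toAddMonoidHom with hs_def
    have hs : ∀ x : M, p (s x) = x := fun x => congrArg (fun f => f x) hsl
    -- the twisted maps and the cocycle
    have htw : ∀ g : Γ, ∀ x y : M,
        g • s (g⁻¹ • (x + y)) = g • s (g⁻¹ • x) + g • s (g⁻¹ • y) := by
      intro g x y
      rw [smul_add, map_add, smul_add]
    set d : Γ → (M →+ E) := fun g =>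
      s - AddMonoidHom.mk' (fun x => g • s (g⁻¹ • x)) (htw g) with hd_def
    have hdval : ∀ (g : Γ) (x : M), d g x = s x - g • s (g⁻¹ • x) := fun g x => rfl
    have hdrange : ∀ (g : Γ) (x : M), d g x ∈ Set.range i := by
      intro g x
      rw [← hker, hdval, map_sub, hs, hpeq, hs, smul_inv_smul, sub_self]
    have hexc : ∀ g : Γ, ∃ cg : M →+ A, ∀ x, i (cg x) = s x - g • s (g⁻¹ • x) := by
      intro g
      obtain ⟨cg, hcg⟩ := lift_aux i hinj (d g) (hdrange g)
      exact ⟨cg, fun x => by rw [hcg, hdval]⟩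
    choose c hc using hexc
    -- the cocycle is locally constant
    obtain ⟨S, hS⟩ := Module.finite_def.mp ‹Module.Finite ℤ M›
    have hlc : IsLocallyConstant c := by
      rw [IsLocallyConstant.iff_exists_open]
      intro g₀
      set W : Set Γ := ⋂ x ∈ (S : Set M),
        ({u : Γ | u • (g₀⁻¹ • x) = g₀⁻¹ • x} ∩ {u : Γ | u • s (g₀⁻¹ • x) = s (g₀⁻¹ • x)})
        with hW_def
      have hWopen : IsOpen W :=
        Set.Finite.isOpen_biInter S.finite_toSet
          (fun x _ => (hMd (g₀⁻¹ • x)).inter (hEd (s (g₀⁻¹ • x))))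
      refine ⟨(fun g => g₀⁻¹ * g) ⁻¹' W, hWopen.preimage (by continuity), ?_, ?_⟩
      · simp only [Set.mem_preimage, inv_mul_cancel, hW_def, Set.mem_iInter,
          Set.mem_inter_iff, Set.mem_setOf_eq]
        exact fun x _ => ⟨one_smul _ _, one_smul _ _⟩
      · intro g hg
        have hu : ∀ x ∈ (S : Set M), (g₀⁻¹ * g) • (g₀⁻¹ • x) = g₀⁻¹ • x ∧
            (g₀⁻¹ * g) • s (g₀⁻¹ • x) = s (g₀⁻¹ • x) := by
          intro x hx
          have := Set.mem_preimage.mp hg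
          rw [hW_def] at this
          simpa using Set.mem_iInter₂.mp this x hx
        have hkey : ∀ x ∈ (S : Set M), c g x = c g₀ x := by
          intro x hx
          apply hinj
          rw [hc, hc]
          obtain ⟨h1, h2⟩ := hu x hx
          have hg_eq : g = g₀ * (g₀⁻¹ * g) := by group
          have hinv : g⁻¹ • x = g₀⁻¹ • x := by
            rw [hg_eq, mul_inv_rev, mul_smul]
            exact inv_smul_eq_iff.mpr h1.symm
          rw [hinv, hg_eq, mul_smul, h2]
        have : (c g).toIntLinearMap = (c g₀).toIntLinearMap :=
          LinearMap.ext_on hS (fun x hx => hkey x hx)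
        exact AddMonoidHom.ext fun x => DFunLike.congr_fun this x
    -- the cocycle identity
    have hcoc : ∀ (g h : Γ) (x : M), c (g * h) x = c g x + g • c h (g⁻¹ • x) := by
      intro g h x
      apply hinj
      rw [map_add, hieq, hc, hc, hc]
      simp only [smul_sub, mul_inv_rev, mul_smul]
      abel
    -- apply the `H¹` hypothesis
    obtain ⟨f, hf⟩ := hH1 c hlc hcoc
    refine ⟨s + i.comp f, fun g x => ?_, fun x => ?_⟩
    · have key : i (c g (g • x)) = s (g • x) - g • s x := by
        rw [hc, inv_smul_smul]
      have key2 : i (c g (g • x)) = g • i (f x) - i (f (g • x)) := by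
        rw [hf, inv_smul_smul, map_sub, hieq]
      simp only [AddMonoidHom.add_apply, AddMonoidHom.comp_apply, smul_add]
      have h' : s (g • x) - g • s x = g • i (f x) - i (f (g • x)) := by
        rw [← key, ← key2]
      rw [sub_eq_sub_iff_add_eq_add] at h'
      rw [h', add_comm]
    · simp [hs, hpi]
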